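/- For the matrix B = [[0,1,0,0],[0,0,1,0],[0,0,0,1],[0,0,0,−1]] (case p = −1), E_{1/2,1}(B) equals the matrix with rows (1, 2/√π, 1, −e·erfc(1) − 2/√π + 2), (0, 1, 2/√π, e·erfc(1) + 2/√π − 1), (0, 0, 1, −e·erfc(1) + 1), (0, 0, 0, e·erfc(1)). -/

import Mathlib

open scoped Real

/-- The matrix Mittag-Leffler function `E_{α,β}(A) = ∑ A^k / Γ(αk+β)`. -/
noncomputable def mittagLefflerMatrix {n : ℕ} (α : ℝ) (β : ℂ)
    (A : Matrix (Fin n) (Fin n) ℂ) : Matrix (Fin n) (Fin n) ℂ :=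
  ∑' k : ℕ, (Complex.Gamma ((α : ℂ) * k + β))⁻¹ • A ^ k

/-- The (real) complementary error function `erfc(x) = (2/√π) ∫_x^∞ e^{-t²} dt`. -/
noncomputable def erfc (x : ℝ) : ℝ :=
  (2 / Real.sqrt π) * ∫ t in Set.Ioi x, Real.exp (-t ^ 2)

open MeasureTheory

lemma Gamma_three_halves : Real.Gamma (3/2) = Real.sqrt π / 2 := by
  rw [show (3/2 : ℝ) = 1/2 + 1 by norm_num, Real.Gamma_add_one (by norm_num),
    Real.Gamma_one_half_eq]
  ring

lemma Gamma_m32_pos (m : ℕ) : 0 < Real.Gamma ((m:ℝ) + 3/2) :=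
  Real.Gamma_pos_of_pos (by positivity)

lemma J_eq : ∀ m : ℕ, ∫ u in (0:ℝ)..1, (1-u^2)^m
    = Real.sqrt π * m.factorial / (2 * Real.Gamma ((m:ℝ) + 3/2)) := by
  intro m
  induction m with
  | zero =>
    simp [Gamma_three_halves]
    have h : Real.sqrt π ≠ 0 := by positivity
    field_simp
  | succ n ih =>
    have hderiv : ∀ u ∈ Set.uIcc (0:ℝ) 1,
        HasDerivAt (fun u : ℝ => u * (1-u^2)^(n+1))
        ((2*(n:ℝ)+3) * (1-u^2)^(n+1) - (2*((n:ℝ)+1)) * (1-u^2)^n) u := by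
      intro u _
      have h2 : HasDerivAt (fun u : ℝ => 1 - u^2) (-(2*u)) u := by
        simpa using ((hasDerivAt_pow 2 u).const_sub 1)
      have h3 := (h2.pow (n+1)).const_mul (1:ℝ)
      have h1 : HasDerivAt (fun u : ℝ => u * (1-u^2)^(n+1)) _ u := (hasDerivAt_id u).mul (h2.pow (n+1))
      convert h1 using 1
      simp only [id_eq, pow_succ]
      push_cast
      ring
    have hcont : Continuous fun u : ℝ =>
        (2*(n:ℝ)+3) * (1-u^2)^(n+1) - (2*((n:ℝ)+1)) * (1-u^2)^n := by fun_prop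
    have h0 : ∫ u in (0:ℝ)..1,
        ((2*(n:ℝ)+3) * (1-u^2)^(n+1) - (2*((n:ℝ)+1)) * (1-u^2)^n) = 0 := by
      rw [intervalIntegral.integral_eq_sub_of_hasDerivAt hderiv
        (hcont.intervalIntegrable 0 1)]
      norm_num
    have hi1 : IntervalIntegrable (fun u : ℝ => (1-u^2)^(n+1)) volume 0 1 :=
      (by fun_prop : Continuous fun u : ℝ => (1-u^2)^(n+1)).intervalIntegrable 0 1
    have hi2 : IntervalIntegrable (fun u : ℝ => (1-u^2)^n) volume 0 1 :=
      (by fun_prop : Continuous fun u : ℝ => (1-u^2)^n).intervalIntegrable 0 1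
    rw [intervalIntegral.integral_sub ((hi1.const_mul _)) ((hi2.const_mul _)),
      intervalIntegral.integral_const_mul, intervalIntegral.integral_const_mul, ih] at h0
    have hG : Real.Gamma (((n:ℝ)+1) + 3/2) = ((n:ℝ) + 3/2) * Real.Gamma ((n:ℝ) + 3/2) := by
      rw [show ((n:ℝ)+1) + 3/2 = ((n:ℝ) + 3/2) + 1 by ring,
        Real.Gamma_add_one (by positivity)]
    have hGpos := Gamma_m32_pos n
    have hJ : ∫ u in (0:ℝ)..1, (1-u^2)^(n+1)
        = (2*((n:ℝ)+1)) * (Real.sqrt π * n.factorial / (2 * Real.Gamma ((n:ℝ) + 3/2))) / (2*(n:ℝ)+3) := by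
      field_simp at h0 ⊢
      linarith [h0]
    rw [hJ]
    push_cast [hG, Nat.factorial_succ]
    field_simp

lemma Gamma_m32_ge (m : ℕ) : Real.Gamma (3/2) * m.factorial ≤ Real.Gamma ((m:ℝ) + 3/2) := by
  induction m with
  | zero => simp
  | succ n ih =>
    rw [show ((n+1:ℕ):ℝ) + 3/2 = ((n:ℝ) + 3/2) + 1 by push_cast <;> ring_nf,
      Real.Gamma_add_one (by positivity)]
    calc Real.Gamma (3/2) * ((n+1).factorial : ℝ)
        = ((n:ℝ)+1) * (Real.Gamma (3/2) * n.factorial) := by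
          rw [Nat.factorial_succ]; push_cast <;> ring_nf
      _ ≤ ((n:ℝ) + 3/2) * Real.Gamma ((n:ℝ) + 3/2) := by
          apply mul_le_mul (by linarith) ih
            (by positivity)
            (by linarith)

lemma summable_one_div_fact : Summable (fun m : ℕ => ((m.factorial : ℝ))⁻¹) := by
  have h := (NormedSpace.expSeries_div_hasSum_exp (1:ℝ)).summable
  simpa [one_div] using h

lemma summable_inv_gamma : Summable (fun m : ℕ => (Real.Gamma ((m:ℝ) + 3/2))⁻¹) := by
  have hG32 : 0 < Real.Gamma (3/2) := Real.Gamma_pos_of_pos (by norm_num)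
  apply Summable.of_nonneg_of_le (fun m => by positivity)
    (fun m => ?_) (summable_one_div_fact.mul_left (Real.Gamma (3/2))⁻¹)
  rw [← mul_inv]
  exact inv_anti₀ (by positivity) (Gamma_m32_ge m)

set_option maxHeartbeats 1000000 in
lemma hasSum_S : HasSum (fun m : ℕ => (Real.Gamma ((m:ℝ) + 3/2))⁻¹)
    (2 / Real.sqrt π * (Real.exp 1 * ∫ t in Set.Ioc (0:ℝ) 1, Real.exp (-t^2))) := by
  have hsq : (0:ℝ) < Real.sqrt π := Real.sqrt_pos.2 Real.pi_pos
  have hIoc : ∀ m : ℕ, ∫ t in Set.Ioc (0:ℝ) 1, ((1-t^2)^m / m.factorial : ℝ)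
      = Real.sqrt π / (2 * Real.Gamma ((m:ℝ) + 3/2)) := by
    intro m
    rw [← intervalIntegral.integral_of_le (zero_le_one), intervalIntegral.integral_div, J_eq]
    have hm : (0:ℝ) < m.factorial := by positivity
    have := Gamma_m32_pos m
    field_simp
  have hint : ∀ m : ℕ, IntegrableOn (fun t : ℝ => ((1-t^2)^m / m.factorial : ℝ))
      (Set.Ioc (0:ℝ) 1) volume := by
    intro m
    exact ((by fun_prop : Continuous fun t : ℝ => ((1-t^2)^m / m.factorial : ℝ))).integrableOn_Ioc
  have hnorm : ∀ m : ℕ, ∫ t in Set.Ioc (0:ℝ) 1, ‖((1-t^2)^m / m.factorial : ℝ)‖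
      = Real.sqrt π / (2 * Real.Gamma ((m:ℝ) + 3/2)) := by
    intro m
    rw [← hIoc m]
    apply setIntegral_congr_fun measurableSet_Ioc
    intro t ht
    dsimp only
    rw [Real.norm_of_nonneg]
    exact div_nonneg (pow_nonneg (by nlinarith [ht.1, ht.2]) m) (by positivity)
  have hsum : Summable fun m : ℕ => ∫ t in Set.Ioc (0:ℝ) 1, ‖((1-t^2)^m / m.factorial : ℝ)‖ := by
    apply Summable.congr (f := fun m : ℕ => Real.sqrt π / (2 * Real.Gamma ((m:ℝ) + 3/2)))
    · apply (summable_inv_gamma.mul_left (Real.sqrt π / 2)).congr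
      intro m
      have := (Gamma_m32_pos m).ne'
      field_simp
    · intro m; exact (hnorm m).symm
  have key : HasSum (fun m : ℕ => ∫ t in Set.Ioc (0:ℝ) 1, ((1-t^2)^m / m.factorial : ℝ))
      (∫ t in Set.Ioc (0:ℝ) 1, (∑' m : ℕ, ((1-t^2)^m / m.factorial : ℝ))) :=
    hasSum_integral_of_summable_integral_norm hint hsum
  have htsum : ∀ t : ℝ, (∑' m : ℕ, ((1-t^2)^m / m.factorial : ℝ)) = Real.exp 1 * Real.exp (-t^2) := by
    intro t
    rw [← Real.exp_add]
    have := (NormedSpace.expSeries_div_hasSum_exp (1 - t^2)).tsum_eq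
    rw [Real.exp_eq_exp_ℝ]
    rw [show (1:ℝ) + -t^2 = 1 - t^2 by ring]
    simpa using this
  have key2 : HasSum (fun m : ℕ => Real.sqrt π / (2 * Real.Gamma ((m:ℝ) + 3/2)))
      (Real.exp 1 * ∫ t in Set.Ioc (0:ℝ) 1, Real.exp (-t^2)) := by
    have h5 : (∫ t in Set.Ioc (0:ℝ) 1, (∑' m : ℕ, ((1-t^2)^m / m.factorial : ℝ)))
        = Real.exp 1 * ∫ t in Set.Ioc (0:ℝ) 1, Real.exp (-t^2) := by
      rw [← integral_const_mul]
      exact setIntegral_congr_fun measurableSet_Ioc (fun t _ => htsum t)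
    rw [← h5]
    exact HasSum.congr_fun key (fun m => (hIoc m).symm)
  have key3 := key2.mul_left (2 / Real.sqrt π)
  apply HasSum.congr_fun key3
  intro m
  have := (Gamma_m32_pos m).ne'
  field_simp

lemma gauss_integrable : Integrable (fun t : ℝ => Real.exp (-t ^ 2)) := by
  simpa using integrable_exp_neg_mul_sq (one_pos)

lemma gauss_split : (∫ t in Set.Ioi (0:ℝ), Real.exp (-t^2))
    = (∫ t in Set.Ioc (0:ℝ) 1, Real.exp (-t^2)) + ∫ t in Set.Ioi (1:ℝ), Real.exp (-t^2) := by
  rw [← setIntegral_union (Set.Ioc_disjoint_Ioi le_rfl) measurableSet_Ioi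
    gauss_integrable.integrableOn gauss_integrable.integrableOn,
    Set.Ioc_union_Ioi_eq_Ioi zero_le_one]

lemma gauss_Ioi : (∫ t in Set.Ioi (0:ℝ), Real.exp (-t^2)) = Real.sqrt π / 2 := by
  have := integral_gaussian_Ioi 1
  simpa using this

lemma S_eq : 2 / Real.sqrt π * (Real.exp 1 * ∫ t in Set.Ioc (0:ℝ) 1, Real.exp (-t^2))
    = Real.exp 1 - Real.exp 1 * erfc 1 := by
  have hsq : (0:ℝ) < Real.sqrt π := Real.sqrt_pos.2 Real.pi_pos
  have h1 : (∫ t in Set.Ioc (0:ℝ) 1, Real.exp (-t^2))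
      = Real.sqrt π / 2 - ∫ t in Set.Ioi (1:ℝ), Real.exp (-t^2) := by
    rw [← gauss_Ioi, gauss_split]; ring
  rw [h1, erfc]
  field_simp

lemma hasSum_E : HasSum (fun k : ℕ => (-1:ℝ)^k * (Real.Gamma ((k:ℝ)/2 + 1))⁻¹)
    (Real.exp 1 * erfc 1) := by
  set f : ℕ → ℝ := fun k => (-1:ℝ)^k * (Real.Gamma ((k:ℝ)/2 + 1))⁻¹ with hf
  have heven : HasSum (fun m : ℕ => f (2*m)) (Real.exp 1) := by
    have h := NormedSpace.expSeries_div_hasSum_exp (1:ℝ)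
    rw [← Real.exp_eq_exp_ℝ] at h
    apply h.congr_fun
    intro m
    rw [hf]
    simp only
    rw [pow_mul]
    have h2 : ((2*m:ℕ):ℝ)/2 + 1 = (m:ℝ) + 1 := by push_cast <;> ring_nf
    rw [h2, Real.Gamma_nat_eq_factorial]
    norm_num
  have hodd : HasSum (fun m : ℕ => f (2*m+1)) (-(Real.exp 1 - Real.exp 1 * erfc 1)) := by
    rw [← S_eq]
    apply hasSum_S.neg.congr_fun
    intro m
    rw [hf]
    simp only
    rw [pow_succ, pow_mul]
    have h2 : ((2*m+1:ℕ):ℝ)/2 + 1 = (m:ℝ) + 3/2 := by push_cast <;> ring_nf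
    rw [h2]
    norm_num
  have h3 := heven.even_add_odd hodd
  rw [show Real.exp 1 + -(Real.exp 1 - Real.exp 1 * erfc 1) = Real.exp 1 * erfc 1 by ring] at h3
  exact h3

noncomputable def gC (k : ℕ) : ℂ := ((Real.Gamma ((k:ℝ)/2 + 1))⁻¹ : ℝ)

lemma coef_eq (k : ℕ) : (Complex.Gamma (((1/2 : ℝ) : ℂ) * k + 1))⁻¹ = gC k := by
  rw [show ((1/2:ℝ):ℂ) * k + 1 = (((k:ℝ)/2 + 1 : ℝ) : ℂ) by push_cast <;> ring_nf,
    Complex.Gamma_ofReal]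
  simp [gC]

lemma gC0 : gC 0 = 1 := by simp [gC, Real.Gamma_one]
lemma gC1 : gC 1 = ((2 / Real.sqrt π : ℝ) : ℂ) := by
  have : ((1:ℕ):ℝ)/2 + 1 = 3/2 := by norm_num
  rw [gC, this, Gamma_three_halves]
  norm_num
lemma gC2 : gC 2 = 1 := by
  have : ((2:ℕ):ℝ)/2 + 1 = 2 := by norm_num
  rw [gC, this, Real.Gamma_two]
  norm_num

lemma hasSum_gE : HasSum (fun k : ℕ => (-1:ℂ)^k * gC k) (((Real.exp 1 * erfc 1 : ℝ)) : ℂ) := by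
  have h := Complex.hasSum_ofReal.2 hasSum_E
  apply h.congr_fun
  intro k
  rw [gC]
  push_cast
  ring

def Bmat : Matrix (Fin 4) (Fin 4) ℂ := !![0,1,0,0;0,0,1,0;0,0,0,1;0,0,0,-1]
def C3 : Matrix (Fin 4) (Fin 4) ℂ := !![0,0,0,1;0,0,0,-1;0,0,0,1;0,0,0,-1]

lemma B2 : Bmat^2 = !![0,0,1,0;0,0,0,1;0,0,0,-1;0,0,0,1] := by
  rw [pow_two]
  ext i j
  fin_cases i <;> fin_cases j <;>
    simp [Bmat, Matrix.mul_apply, Fin.sum_univ_four, Matrix.vecHead, Matrix.vecTail]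

lemma B3 : Bmat^3 = C3 := by
  rw [pow_succ, B2]
  ext i j
  fin_cases i <;> fin_cases j <;>
    simp [Bmat, C3, Matrix.mul_apply, Fin.sum_univ_four, Matrix.vecHead, Matrix.vecTail]

lemma C3B : C3 * Bmat = -C3 := by
  ext i j
  fin_cases i <;> fin_cases j <;>
    simp [Bmat, C3, Matrix.mul_apply, Fin.sum_univ_four, Matrix.vecHead, Matrix.vecTail]

lemma Bpow (n : ℕ) : Bmat^(n+3) = (-1:ℂ)^n • C3 := by
  induction n with
  | zero => simpa using B3
  | succ m ih =>
    rw [show m+1+3 = (m+3)+1 by ring, pow_succ, ih, Matrix.smul_mul, C3B, pow_succ]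
    rw [smul_neg, ← neg_smul]
    ring_nf

noncomputable def Ec : ℂ := ((Real.exp 1 * erfc 1 : ℝ) : ℂ)
noncomputable def rc : ℂ := ((2 / Real.sqrt π : ℝ) : ℂ)

lemma h33 : HasSum (fun k : ℕ => gC k * ((Bmat^k) 3 3)) Ec := by
  apply hasSum_gE.congr_fun
  intro k
  rcases k with _ | _ | _ | n
  · simp [gC0]
  · simp [Bmat, pow_one] <;> ring_nf
  · simp [B2] <;> ring_nf
  · rw [show (n+1+1+1 : ℕ) = n+3 from rfl, Bpow]
    simp [C3, Matrix.smul_apply, pow_succ]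
    ring

lemma h23 : HasSum (fun k : ℕ => gC k * ((Bmat^k) 2 3)) (-Ec + 1) := by
  have base := hasSum_gE.neg.add (hasSum_ite_eq 0 (1:ℂ))
  rw [show -((Real.exp 1 * erfc 1 : ℝ):ℂ) + 1 = -Ec + 1 from rfl] at base
  apply base.congr_fun
  intro k
  rcases k with _ | _ | _ | n
  · simp [gC0]
  · simp [Bmat, pow_one] <;> ring_nf
  · simp [B2] <;> ring_nf
  · rw [show (n+1+1+1 : ℕ) = n+3 from rfl, Bpow]
    simp [C3, Matrix.smul_apply, pow_succ]
    ring

lemma h13 : HasSum (fun k : ℕ => gC k * ((Bmat^k) 1 3)) (Ec + -1 + rc) := by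
  have base := (hasSum_gE.add (hasSum_ite_eq 0 (-1:ℂ))).add (hasSum_ite_eq 1 rc)
  rw [show ((Real.exp 1 * erfc 1 : ℝ):ℂ) + -1 + rc = Ec + -1 + rc from rfl] at base
  apply base.congr_fun
  intro k
  rcases k with _ | _ | _ | n
  · simp [gC0]
  · simp [Bmat, pow_one, gC1, rc]
  · simp [B2] <;> ring_nf
  · rw [show (n+1+1+1 : ℕ) = n+3 from rfl, Bpow]
    simp [C3, Matrix.smul_apply, pow_succ]
    ring

lemma h03 : HasSum (fun k : ℕ => gC k * ((Bmat^k) 0 3)) (-Ec + 1 + -rc + 1) := by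
  have base := ((hasSum_gE.neg.add (hasSum_ite_eq 0 (1:ℂ))).add
    (hasSum_ite_eq 1 (-rc))).add (hasSum_ite_eq 2 (1:ℂ))
  rw [show -((Real.exp 1 * erfc 1 : ℝ):ℂ) + 1 + -rc + 1 = -Ec + 1 + -rc + 1 from rfl] at base
  apply base.congr_fun
  intro k
  rcases k with _ | _ | _ | n
  · simp [gC0]
  · simp [Bmat, pow_one, gC1, rc]
  · simp [B2, gC2]
  · rw [show (n+1+1+1 : ℕ) = n+3 from rfl, Bpow]
    simp [C3, Matrix.smul_apply, pow_succ]
    ring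

lemma hzero (i j : Fin 4) (h0 : (1 : Matrix (Fin 4) (Fin 4) ℂ) i j = 0)
    (h1 : Bmat i j = 0) (h2 : (Bmat^2) i j = 0) (h3 : C3 i j = 0) :
    HasSum (fun k : ℕ => gC k * ((Bmat^k) i j)) 0 := by
  apply hasSum_zero.congr_fun
  intro k
  rcases k with _ | _ | _ | n
  · simp [h0]
  · simp [pow_one, h1]
  · simp [h2]
  · rw [show (n+1+1+1 : ℕ) = n+3 from rfl, Bpow]
    simp [Matrix.smul_apply, h3]

lemma hsingle (i j : Fin 4) (k₀ : ℕ) (v : ℂ) (hv : gC k₀ * ((Bmat^k₀) i j) = v)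
    (hz : ∀ k : ℕ, k ≠ k₀ → (Bmat^k) i j = 0) :
    HasSum (fun k : ℕ => gC k * ((Bmat^k) i j)) v := by
  apply (hasSum_ite_eq k₀ v).congr_fun
  intro k
  by_cases h : k = k₀
  · subst h; simp [hv]
  · simp [h, hz k h]

theorem mittagLefflerMatrix_half_one_example :
    mittagLefflerMatrix (1 / 2) 1
      (!![0, 1, 0, 0;
          0, 0, 1, 0;
          0, 0, 0, 1;
          0, 0, 0, -1] : Matrix (Fin 4) (Fin 4) ℂ)
    = !![1, ((2 / Real.sqrt π : ℝ) : ℂ), 1,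
           ((-(Real.exp 1 * erfc 1) - 2 / Real.sqrt π + 2 : ℝ) : ℂ);
         0, 1, ((2 / Real.sqrt π : ℝ) : ℂ),
           ((Real.exp 1 * erfc 1 + 2 / Real.sqrt π - 1 : ℝ) : ℂ);
         0, 0, 1, ((-(Real.exp 1 * erfc 1) + 1 : ℝ) : ℂ);
         0, 0, 0, ((Real.exp 1 * erfc 1 : ℝ) : ℂ)] := by
  rw [mittagLefflerMatrix]
  have hfun : (fun k : ℕ => (Complex.Gamma ((((1/2 : ℝ)) : ℂ) * k + 1))⁻¹ • Bmat ^ k)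
      = fun k : ℕ => gC k • Bmat ^ k := by
    funext k; rw [coef_eq]
  refine HasSum.tsum_eq ?_
  show HasSum (fun k : ℕ => (Complex.Gamma ((((1/2 : ℝ)) : ℂ) * k + 1))⁻¹ • Bmat ^ k) _
  rw [hfun]
  refine Pi.hasSum.2 fun i => Pi.hasSum.2 fun j => ?_
  have hsm : ∀ (i j : Fin 4), (fun k : ℕ => (gC k • Bmat ^ k) i j)
      = fun k : ℕ => gC k * ((Bmat^k) i j) := by
    intro i j; funext k; simp [Matrix.smul_apply]
  have key03 : HasSum (fun k : ℕ => gC k * ((Bmat^k) 0 3))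
      ((-(Real.exp 1 * erfc 1) - 2 / Real.sqrt π + 2 : ℝ) : ℂ) := by
    have h := h03
    rw [show -Ec + 1 + -rc + 1 = ((-(Real.exp 1 * erfc 1) - 2 / Real.sqrt π + 2 : ℝ) : ℂ) by
      rw [Ec, rc]; push_cast; ring] at h
    exact h
  have key13 : HasSum (fun k : ℕ => gC k * ((Bmat^k) 1 3))
      ((Real.exp 1 * erfc 1 + 2 / Real.sqrt π - 1 : ℝ) : ℂ) := by
    have h := h13
    rw [show Ec + -1 + rc = ((Real.exp 1 * erfc 1 + 2 / Real.sqrt π - 1 : ℝ) : ℂ) by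
      rw [Ec, rc]; push_cast; ring] at h
    exact h
  have key23 : HasSum (fun k : ℕ => gC k * ((Bmat^k) 2 3))
      ((-(Real.exp 1 * erfc 1) + 1 : ℝ) : ℂ) := by
    have h := h23
    rw [show -Ec + 1 = ((-(Real.exp 1 * erfc 1) + 1 : ℝ) : ℂ) by
      rw [Ec]; push_cast; ring] at h
    exact h
  have hz' : ∀ (i j : Fin 4), (1 : Matrix (Fin 4) (Fin 4) ℂ) i j = 0 →
      Bmat i j = 0 → (Bmat^2) i j = 0 → C3 i j = 0 →
      ∀ (v : ℂ), v = 0 → HasSum (fun k : ℕ => gC k * ((Bmat^k) i j)) v := by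
    intro i j h0 h1 h2 h3 v hv
    rw [hv]; exact hzero i j h0 h1 h2 h3
  fin_cases i <;> fin_cases j <;> rw [hsm]
  · exact hsingle 0 0 0 1 (by simp [gC0, Matrix.one_apply]) (fun k hk => by
      rcases k with _ | _ | _ | n
      · omega
      · simp [Bmat, pow_one, Matrix.vecHead, Matrix.vecTail]
      · simp [B2, Matrix.vecHead, Matrix.vecTail]
      · rw [show (n+1+1+1 : ℕ) = n+3 from rfl, Bpow]; simp [C3, Matrix.smul_apply, Matrix.vecHead, Matrix.vecTail])
  · exact hsingle 0 1 1 ((2 / Real.sqrt π : ℝ) : ℂ) (by rw [pow_one]; rw [gC1]; simp [Bmat, Matrix.vecHead, Matrix.vecTail])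
      (fun k hk => by
      rcases k with _ | _ | _ | n
      · simp [Matrix.one_apply]
      · omega
      · simp [B2, Matrix.vecHead, Matrix.vecTail]
      · rw [show (n+1+1+1 : ℕ) = n+3 from rfl, Bpow]; simp [C3, Matrix.smul_apply, Matrix.vecHead, Matrix.vecTail])
  · exact hsingle 0 2 2 1 (by rw [gC2, B2]; simp [Matrix.vecHead, Matrix.vecTail]) (fun k hk => by
      rcases k with _ | _ | _ | n
      · simp [Matrix.one_apply]
      · simp [Bmat, pow_one, Matrix.vecHead, Matrix.vecTail]
      · omega
      · rw [show (n+1+1+1 : ℕ) = n+3 from rfl, Bpow]; simp [C3, Matrix.smul_apply, Matrix.vecHead, Matrix.vecTail])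
  · exact key03
  · exact hz' 1 0 (by simp [Matrix.one_apply]) (by simp [Bmat, Matrix.vecHead, Matrix.vecTail]) (by rw [B2]; simp [Matrix.vecHead, Matrix.vecTail])
      (by simp [C3, Matrix.vecHead, Matrix.vecTail]) _ rfl
  · exact hsingle 1 1 0 1 (by simp [gC0, Matrix.one_apply]) (fun k hk => by
      rcases k with _ | _ | _ | n
      · omega
      · simp [Bmat, pow_one, Matrix.vecHead, Matrix.vecTail]
      · simp [B2, Matrix.vecHead, Matrix.vecTail]
      · rw [show (n+1+1+1 : ℕ) = n+3 from rfl, Bpow]; simp [C3, Matrix.smul_apply, Matrix.vecHead, Matrix.vecTail])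
  · exact hsingle 1 2 1 ((2 / Real.sqrt π : ℝ) : ℂ) (by rw [pow_one]; rw [gC1]; simp [Bmat, Matrix.vecHead, Matrix.vecTail])
      (fun k hk => by
      rcases k with _ | _ | _ | n
      · simp [Matrix.one_apply]
      · omega
      · simp [B2, Matrix.vecHead, Matrix.vecTail]
      · rw [show (n+1+1+1 : ℕ) = n+3 from rfl, Bpow]; simp [C3, Matrix.smul_apply, Matrix.vecHead, Matrix.vecTail])
  · exact key13
  · exact hz' 2 0 (by simp [Matrix.one_apply]) (by simp [Bmat, Matrix.vecHead, Matrix.vecTail]) (by rw [B2]; simp [Matrix.vecHead, Matrix.vecTail])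
      (by simp [C3, Matrix.vecHead, Matrix.vecTail]) _ rfl
  · exact hz' 2 1 (by simp [Matrix.one_apply]) (by simp [Bmat, Matrix.vecHead, Matrix.vecTail]) (by rw [B2]; simp [Matrix.vecHead, Matrix.vecTail])
      (by simp [C3, Matrix.vecHead, Matrix.vecTail]) _ rfl
  · exact hsingle 2 2 0 1 (by simp [gC0, Matrix.one_apply]) (fun k hk => by
      rcases k with _ | _ | _ | n
      · omega
      · simp [Bmat, pow_one, Matrix.vecHead, Matrix.vecTail]
      · simp [B2, Matrix.vecHead, Matrix.vecTail]
      · rw [show (n+1+1+1 : ℕ) = n+3 from rfl, Bpow]; simp [C3, Matrix.smul_apply, Matrix.vecHead, Matrix.vecTail])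
  · exact key23
  · exact hz' 3 0 (by simp [Matrix.one_apply]) (by simp [Bmat, Matrix.vecHead, Matrix.vecTail]) (by rw [B2]; simp [Matrix.vecHead, Matrix.vecTail])
      (by simp [C3, Matrix.vecHead, Matrix.vecTail]) _ rfl
  · exact hz' 3 1 (by simp [Matrix.one_apply]) (by simp [Bmat, Matrix.vecHead, Matrix.vecTail]) (by rw [B2]; simp [Matrix.vecHead, Matrix.vecTail])
      (by simp [C3, Matrix.vecHead, Matrix.vecTail]) _ rfl
  · exact hz' 3 2 (by simp [Matrix.one_apply]) (by simp [Bmat, Matrix.vecHead, Matrix.vecTail]) (by rw [B2]; simp [Matrix.vecHead, Matrix.vecTail])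
      (by simp [C3, Matrix.vecHead, Matrix.vecTail]) _ rfl
  · exact h33
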